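/- Let N = 1 + p + q and write points of ℂ^N as (z, u, v) ∈ ℂ × ℂ^p × ℂ^q, so that ℍ^N = {(z,u,v) : Im z > |u|² + |v|²}. Let a ∈ ℂ^p, let b ∈ ℝ, and let D be a q×q diagonal matrix whose diagonal entries have modulus 1 and are different from 1. Then the parabolic automorphism ψ(z, u, v) = (z + 2i⟨u, a⟩ + i|a|² + b, u + a, D v) of ℍ^N can be embedded into a semigroup of holomorphic self-maps (in fact automorphisms) of ℍ^N. -/

import Mathlib

open Matrix Set Complex Filter

noncomputable section

/-- The Hermitian inner product `⟨x, y⟩ = ∑ j, x j * conj (y j)` on `ℂ^n`. -/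
def herm {n : Type*} [Fintype n] (x y : n → ℂ) : ℂ :=
  ∑ j, x j * (starRingEnd ℂ) (y j)

/-- The squared Euclidean norm on `ℂ^n`. -/
def enormSq {n : Type*} [Fintype n] (x : n → ℂ) : ℝ :=
  ∑ j, ‖x j‖ ^ 2

/-- `(φ t)_{t ≥ 0}` is a (continuous) semigroup of holomorphic self-maps of `U`. -/
def IsHolSemigroupOn {E : Type*} [NormedAddCommGroup E] [NormedSpace ℂ E]
    (U : Set E) (φ : ℝ → E → E) : Prop :=
  (∀ t : ℝ, 0 ≤ t → MapsTo (φ t) U U) ∧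
  (∀ t : ℝ, 0 ≤ t → DifferentiableOn ℂ (φ t) U) ∧
  (∀ z ∈ U, φ 0 z = z) ∧
  (∀ s : ℝ, 0 ≤ s → ∀ t : ℝ, 0 ≤ t → ∀ z ∈ U, φ (s + t) z = φ s (φ t z)) ∧
  (∀ K : Set E, K ⊆ U → IsCompact K →
    TendstoUniformlyOn (fun t => φ t) id (nhdsWithin 0 (Ioi 0)) K)

/-- `ℂ^N = ℂ × ℂ^p × ℂ^q`. -/
abbrev E3 (p q : ℕ) : Type := ℂ × (Fin p → ℂ) × (Fin q → ℂ)

/-- The Siegel half-plane `ℍ^N = {(z,u,v) : Im z > |u|² + |v|²}`. -/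
def Siegel3 (p q : ℕ) : Set (E3 p q) :=
  {x | enormSq x.2.1 + enormSq x.2.2 < x.1.im}


lemma herm_self {n : Type*} [Fintype n] (x : n → ℂ) : herm x x = (enormSq x : ℂ) := by
  unfold herm enormSq
  push_cast
  refine Finset.sum_congr rfl fun j _ => ?_
  rw [Complex.mul_conj]
  norm_cast
  rw [Complex.sq_norm]

lemma herm_add_left {n : Type*} [Fintype n] (x y z : n → ℂ) :
    herm (fun j => x j + y j) z = herm x z + herm y z := by
  unfold herm
  rw [← Finset.sum_add_distrib]
  exact Finset.sum_congr rfl fun j _ => by ring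

lemma herm_smul_left {n : Type*} [Fintype n] (c : ℂ) (x z : n → ℂ) :
    herm (fun j => c * x j) z = c * herm x z := by
  unfold herm
  rw [Finset.mul_sum]
  exact Finset.sum_congr rfl fun j _ => by ring

lemma enormSq_add_mul {n : Type*} [Fintype n] (t : ℝ) (u a : n → ℂ) :
    enormSq (fun j => u j + (t:ℂ) * a j)
      = enormSq u + 2 * t * (herm u a).re + t^2 * enormSq a := by
  unfold enormSq herm
  rw [Complex.re_sum]
  rw [Finset.mul_sum, Finset.mul_sum, ← Finset.sum_add_distrib, ← Finset.sum_add_distrib]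
  refine Finset.sum_congr rfl fun j _ => ?_
  have h1 : ∀ z : ℂ, ‖z‖^2 = Complex.normSq z := fun z => by
    rw [Complex.sq_norm]
  rw [h1, h1, h1, Complex.normSq_add, Complex.normSq_mul, Complex.normSq_ofReal]
  have : (u j * (starRingEnd ℂ) ((t:ℂ) * a j)).re = t * (u j * (starRingEnd ℂ) (a j)).re := by
    rw [_root_.map_mul, Complex.conj_ofReal]
    rw [show u j * ((t:ℂ) * (starRingEnd ℂ) (a j)) = (t:ℂ) * (u j * (starRingEnd ℂ) (a j)) by ring]
    rw [Complex.re_ofReal_mul]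
  rw [this]; ring

def phiFam {p q : ℕ} (a : Fin p → ℂ) (b : ℝ) (e : Fin q → ℂ) (t : ℝ) (x : E3 p q) : E3 p q :=
  (x.1 + 2 * Complex.I * (t:ℂ) * herm x.2.1 a + Complex.I * (t:ℂ)^2 * (enormSq a : ℂ)
      + (t:ℂ) * (b:ℂ),
   fun j => x.2.1 j + (t:ℂ) * a j,
   fun j => Complex.exp ((t:ℂ) * ((e j).arg : ℂ) * Complex.I) * x.2.2 j)

lemma phiFam_zero {p q : ℕ} (a : Fin p → ℂ) (b : ℝ) (e : Fin q → ℂ) :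
    phiFam a b e 0 = id := by
  funext x
  simp [phiFam]

lemma exp_arg_norm {t : ℝ} {θ : ℝ} : ‖Complex.exp ((t:ℂ) * (θ:ℂ) * Complex.I)‖ = 1 := by
  simp [Complex.norm_exp]

lemma enormSq_rot {q : ℕ} (t : ℝ) (e : Fin q → ℂ) (v : Fin q → ℂ) :
    enormSq (fun j => Complex.exp ((t:ℂ) * ((e j).arg : ℂ) * Complex.I) * v j) = enormSq v := by
  unfold enormSq
  refine Finset.sum_congr rfl fun j _ => ?_
  rw [norm_mul, exp_arg_norm, one_mul]

lemma phiFam_first_im {p q : ℕ} (a : Fin p → ℂ) (b : ℝ) (e : Fin q → ℂ) (t : ℝ) (x : E3 p q) :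
    (phiFam a b e t x).1.im = x.1.im + 2 * t * (herm x.2.1 a).re + t^2 * enormSq a := by
  have h : ((t:ℂ)^2).re = t^2 := by norm_cast
  simp [phiFam, Complex.add_im, Complex.mul_im, Complex.mul_re, h]

lemma phiFam_inv {p q : ℕ} (a : Fin p → ℂ) (b : ℝ) (e : Fin q → ℂ) (t : ℝ) (x : E3 p q) :
    (phiFam a b e t x).1.im - (enormSq (phiFam a b e t x).2.1 + enormSq (phiFam a b e t x).2.2)
      = x.1.im - (enormSq x.2.1 + enormSq x.2.2) := by
  rw [phiFam_first_im]
  show _ - (enormSq (fun j => x.2.1 j + (t:ℂ) * a j)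
      + enormSq (fun j => Complex.exp ((t:ℂ) * ((e j).arg : ℂ) * Complex.I) * x.2.2 j)) = _
  rw [enormSq_add_mul, enormSq_rot]
  ring

lemma phiFam_add {p q : ℕ} (a : Fin p → ℂ) (b : ℝ) (e : Fin q → ℂ) (s t : ℝ) (x : E3 p q) :
    phiFam a b e (s + t) x = phiFam a b e s (phiFam a b e t x) := by
  unfold phiFam
  refine Prod.ext ?_ (Prod.ext ?_ ?_)
  · show _ = (x.1 + 2 * Complex.I * (t:ℂ) * herm x.2.1 a + Complex.I * (t:ℂ)^2 * (enormSq a : ℂ)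
        + (t:ℂ) * (b:ℂ)) + 2 * Complex.I * (s:ℂ) * herm (fun j => x.2.1 j + (t:ℂ) * a j) a
        + Complex.I * (s:ℂ)^2 * (enormSq a : ℂ) + (s:ℂ) * (b:ℂ)
    rw [show (fun j => x.2.1 j + (t:ℂ) * a j) = (fun j => x.2.1 j + ((fun k => (t:ℂ) * a k) j))
        from rfl, herm_add_left, herm_smul_left, herm_self]
    push_cast
    ring
  · funext j
    show x.2.1 j + (((s + t : ℝ)):ℂ) * a j = (x.2.1 j + (t:ℂ) * a j) + (s:ℂ) * a j
    push_cast
    ring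
  · funext j
    show Complex.exp (((s:ℝ) + t : ℝ) * ((e j).arg : ℂ) * Complex.I) * x.2.2 j
        = Complex.exp ((s:ℂ) * ((e j).arg : ℂ) * Complex.I)
          * (Complex.exp ((t:ℂ) * ((e j).arg : ℂ) * Complex.I) * x.2.2 j)
    rw [← mul_assoc, ← Complex.exp_add]
    congr 1
    push_cast
    ring

lemma phiFam_diff {p q : ℕ} (a : Fin p → ℂ) (b : ℝ) (e : Fin q → ℂ) (t : ℝ) :
    Differentiable ℂ (phiFam a b e t) := by
  unfold phiFam
  refine Differentiable.prodMk ?_ (Differentiable.prodMk ?_ ?_)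
  · have hH : Differentiable ℂ (fun x : E3 p q => herm x.2.1 a) := by
      unfold herm
      exact Differentiable.fun_sum fun j _ => by fun_prop
    fun_prop
  · refine differentiable_pi.mpr fun j => ?_
    have : Differentiable ℂ (fun x : E3 p q => x.2.1 j) := by fun_prop
    fun_prop
  · refine differentiable_pi.mpr fun j => ?_
    have : Differentiable ℂ (fun x : E3 p q => x.2.2 j) := by fun_prop
    fun_prop

lemma phiFam_cont {p q : ℕ} (a : Fin p → ℂ) (b : ℝ) (e : Fin q → ℂ) :
    Continuous (fun y : ℝ × E3 p q => phiFam a b e y.1 y.2) := by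
  unfold phiFam
  refine Continuous.prodMk ?_ (Continuous.prodMk ?_ ?_)
  · have hH : Continuous (fun y : ℝ × E3 p q => herm y.2.2.1 a) := by
      unfold herm
      exact continuous_finset_sum _ fun j _ => by fun_prop
    fun_prop
  · refine continuous_pi fun j => ?_
    fun_prop
  · refine continuous_pi fun j => ?_
    fun_prop


/-- The parabolic automorphism
`ψ(z,u,v) = (z + 2i⟨u,a⟩ + i|a|² + b, u + a, D v)` of `ℍ^N` (with `b` real and `D`
diagonal with unimodular diagonal entries different from `1`) can be embedded
into a semigroup of holomorphic self-maps of `ℍ^N`. -/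
theorem stmt11 {p q : ℕ} (a : Fin p → ℂ) (b : ℝ)
    (e : Fin q → ℂ) (he : ∀ j, ‖e j‖ = 1) (he1 : ∀ j, e j ≠ 1)
    (ψ : E3 p q → E3 p q)
    (hψ : ∀ x, ψ x = (x.1 + 2 * Complex.I * herm x.2.1 a
        + Complex.I * (enormSq a : ℂ) + (b : ℂ),
      x.2.1 + a, (Matrix.diagonal e).mulVec x.2.2)) :
    ∃ φt : ℝ → E3 p q → E3 p q,
      IsHolSemigroupOn (Siegel3 p q) φt ∧ ∀ z ∈ Siegel3 p q, φt 1 z = ψ z := by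
  unfold IsHolSemigroupOn
  refine ⟨phiFam a b e, ⟨?_, ?_, ?_, ?_, ?_⟩, ?_⟩
  · intro t _ x hx
    have := phiFam_inv a b e t x
    simp only [Siegel3, mem_setOf_eq] at hx ⊢
    linarith
  · intro t _
    exact (phiFam_diff a b e t).differentiableOn
  · intro z _
    rw [phiFam_zero]; rfl
  · intro s _ t _ z _
    exact phiFam_add a b e s t z
  · intro K _ hK
    have hUC : UniformContinuousOn (Function.uncurry (phiFam a b e))
        ((Icc (-1:ℝ) 1) ×ˢ K) :=
      (isCompact_Icc.prod hK).uniformContinuousOn_of_continuous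
        (phiFam_cont a b e).continuousOn
    have H := UniformContinuousOn.tendstoUniformlyOn (F := phiFam a b e) (x := (0:ℝ))
        hUC (show (0:ℝ) ∈ Icc (-1:ℝ) 1 by norm_num)
    rw [phiFam_zero] at H
    intro u hu
    refine (H u hu).filter_mono (nhdsWithin_le_of_mem ?_)
    exact mem_nhdsWithin_of_mem_nhds (Icc_mem_nhds (by norm_num) (by norm_num))
  · intro z _
    rw [hψ]
    unfold phiFam
    refine Prod.ext ?_ (Prod.ext ?_ ?_)
    · show z.1 + 2 * Complex.I * ((1:ℝ):ℂ) * herm z.2.1 a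
          + Complex.I * ((1:ℝ):ℂ)^2 * (enormSq a : ℂ) + ((1:ℝ):ℂ) * (b:ℂ) = _
      push_cast
      ring
    · funext j
      show z.2.1 j + ((1:ℝ):ℂ) * a j = z.2.1 j + a j
      push_cast
      ring
    · funext j
      show Complex.exp (((1:ℝ):ℂ) * ((e j).arg : ℂ) * Complex.I) * z.2.2 j
          = (Matrix.diagonal e).mulVec z.2.2 j
      rw [Matrix.mulVec_diagonal]
      congr 1
      have := Complex.norm_mul_exp_arg_mul_I (e j)
      rw [he j, Complex.ofReal_one, one_mul] at this
      rw [show ((1:ℝ):ℂ) * ((e j).arg : ℂ) * Complex.I = ((e j).arg : ℂ) * Complex.I by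
        push_cast; ring]
      exact this
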